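/- Let n ≥ 1 and let λ : {1,…,n} → Bool be a word. Then there is exactly one cup diagram M that is oriented for λ, admissible for λ, and of degree 0 for λ. -/
import Mathlib


/-- A cup diagram on `{0,…,n-1}`: a finite set `M` of pairs `(i,j)` with `i < j`,
with pairwise disjoint endpoints, non-crossing, and such that every position
strictly between the endpoints of a cup is itself an endpoint of some cup. -/
def IsCupDiagram {n : ℕ} (M : Finset (Fin n × Fin n)) : Prop :=
  (∀ p ∈ M, p.1 < p.2) ∧
  (∀ p ∈ M, ∀ q ∈ M, p ≠ q →
    p.1 ≠ q.1 ∧ p.1 ≠ q.2 ∧ p.2 ≠ q.1 ∧ p.2 ≠ q.2) ∧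
  (∀ p ∈ M, ∀ q ∈ M, ¬(p.1 < q.1 ∧ q.1 < p.2 ∧ p.2 < q.2)) ∧
  (∀ p ∈ M, ∀ l : Fin n, p.1 < l → l < p.2 → ∃ q ∈ M, l = q.1 ∨ l = q.2)

/-- A position is free if it is not an endpoint of any pair of `M`. -/
def IsFree {n : ℕ} (M : Finset (Fin n × Fin n)) (l : Fin n) : Prop :=
  ∀ p ∈ M, p.1 ≠ l ∧ p.2 ≠ l

/-- `M` is oriented for the word `λ` if the two endpoints of each cup carry
different letters. -/
def OrientedFor {n : ℕ} (lam : Fin n → Bool) (M : Finset (Fin n × Fin n)) : Prop :=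
  ∀ p ∈ M, lam p.1 ≠ lam p.2

/-- The degree of `M` for `λ`: the number of cups `(i,j)` with `λ(i) = true`
(clockwise cups). -/
def cupDegree {n : ℕ} (lam : Fin n → Bool) (M : Finset (Fin n × Fin n)) : ℕ :=
  (M.filter (fun p => lam p.1 = true)).card

/-- `M` is admissible for `λ` if there are no free positions `i < j` with
`λ(i) = false` (`∨`) and `λ(j) = true` (`∧`). -/
def AdmissibleFor {n : ℕ} (lam : Fin n → Bool) (M : Finset (Fin n × Fin n)) : Prop :=
  ∀ i j : Fin n, i < j → IsFree M i → IsFree M j → ¬(lam i = false ∧ lam j = true)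

section Aux

variable {n : ℕ}

/-- Generalized validity: cup diagram supported on `S`, with all cups having
`false` left endpoint and `true` right endpoint (oriented & degree 0),
and admissible relative to `S`. -/
def ValidOn (lam : Fin n → Bool) (S : Finset (Fin n)) (M : Finset (Fin n × Fin n)) : Prop :=
  (∀ p ∈ M, p.1 ∈ S ∧ p.2 ∈ S) ∧
  (∀ p ∈ M, p.1 < p.2) ∧
  (∀ p ∈ M, ∀ q ∈ M, p ≠ q → p.1 ≠ q.1 ∧ p.1 ≠ q.2 ∧ p.2 ≠ q.1 ∧ p.2 ≠ q.2) ∧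
  (∀ p ∈ M, ∀ q ∈ M, ¬(p.1 < q.1 ∧ q.1 < p.2 ∧ p.2 < q.2)) ∧
  (∀ p ∈ M, ∀ l ∈ S, p.1 < l → l < p.2 → ∃ q ∈ M, l = q.1 ∨ l = q.2) ∧
  (∀ p ∈ M, lam p.1 = false ∧ lam p.2 = true) ∧
  (∀ i ∈ S, ∀ j ∈ S, i < j → (∀ p ∈ M, p.1 ≠ i ∧ p.2 ≠ i) →
     (∀ p ∈ M, p.1 ≠ j ∧ p.2 ≠ j) → ¬(lam i = false ∧ lam j = true))

lemma exists_adjacent_bad (lam : Fin n → Bool) (S : Finset (Fin n))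
    (h : ∃ i ∈ S, ∃ j ∈ S, i < j ∧ lam i = false ∧ lam j = true) :
    ∃ i ∈ S, ∃ j ∈ S, i < j ∧ lam i = false ∧ lam j = true ∧
      ∀ l ∈ S, ¬(i < l ∧ l < j) := by
  classical
  set T := (S ×ˢ S).filter (fun p => p.1 < p.2 ∧ lam p.1 = false ∧ lam p.2 = true) with hT
  have hTne : T.Nonempty := by
    obtain ⟨i, hi, j, hj, h1, h2, h3⟩ := h
    exact ⟨(i, j), by simp [hT, Finset.mem_filter, Finset.mem_product, hi, hj, h1, h2, h3]⟩
  obtain ⟨p, hp, hmin⟩ := T.exists_min_image (fun p => p.2.val - p.1.val) hTne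
  simp only [hT, Finset.mem_filter, Finset.mem_product] at hp
  obtain ⟨⟨hp1, hp2⟩, hlt, hf, ht⟩ := hp
  refine ⟨p.1, hp1, p.2, hp2, hlt, hf, ht, ?_⟩
  rintro l hl ⟨h1l, hl2⟩
  have hv1 : p.1.val < l.val := h1l
  have hv2 : l.val < p.2.val := hl2
  cases hlam : lam l
  · have hmem : (l, p.2) ∈ T := by
      simp [hT, Finset.mem_filter, Finset.mem_product, hl, hp2, hl2, hlam, ht]
    have := hmin _ hmem
    simp only at this
    omega
  · have hmem : (p.1, l) ∈ T := by
      simp [hT, Finset.mem_filter, Finset.mem_product, hl, hp1, h1l, hlam, hf]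
    have := hmin _ hmem
    simp only at this
    omega

lemma mem_of_adjacent {lam : Fin n → Bool} {S : Finset (Fin n)} {M : Finset (Fin n × Fin n)}
    (hV : ValidOn lam S M) {i j : Fin n} (hi : i ∈ S) (hj : j ∈ S) (hij : i < j)
    (hfi : lam i = false) (htj : lam j = true)
    (hadj : ∀ l ∈ S, ¬(i < l ∧ l < j)) : (i, j) ∈ M := by
  obtain ⟨hSub, hlt, hdisj, hcross, hint, hor, hadm⟩ := hV
  by_cases hiFree : ∀ p ∈ M, p.1 ≠ i ∧ p.2 ≠ i
  · by_cases hjFree : ∀ p ∈ M, p.1 ≠ j ∧ p.2 ≠ j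
    · exact absurd ⟨hfi, htj⟩ (hadm i hi j hj hij hiFree hjFree)
    · simp only [not_forall, not_and_or, not_ne_iff, exists_prop] at hjFree
      obtain ⟨q, hq, hcase⟩ := hjFree
      rcases hcase with h1 | h2
      · have := (hor q hq).1
        rw [h1, htj] at this
        exact absurd this (by simp)
      · -- q.2 = j : locate q.1
        have hq1S : q.1 ∈ S := (hSub q hq).1
        have hq1j : q.1 < j := h2 ▸ hlt q hq
        have hq1i : q.1 ≠ i := fun h => (hiFree q hq).1 h
        rcases lt_trichotomy q.1 i with hc | hc | hc
        · -- i strictly inside q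
          obtain ⟨r, hr, hre⟩ := hint q hq i hi hc (h2 ▸ hij)
          rcases hre with h | h
          · exact absurd h.symm (hiFree r hr).1
          · exact absurd h.symm (hiFree r hr).2
        · exact absurd hc hq1i
        · exact absurd ⟨hc, hq1j⟩ (hadj q.1 hq1S)
  · simp only [not_forall, not_and_or, not_ne_iff, exists_prop] at hiFree
    obtain ⟨p, hp, hcase⟩ := hiFree
    rcases hcase with h1 | h2
    · -- p.1 = i
      have hp2S : p.2 ∈ S := (hSub p hp).2
      have hip2 : i < p.2 := h1 ▸ hlt p hp
      rcases lt_trichotomy p.2 j with hc | hc | hc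
      · exact absurd ⟨hip2, hc⟩ (hadj p.2 hp2S)
      · have : p = (i, j) := Prod.ext h1 hc
        exact this ▸ hp
      · -- j strictly inside p
        obtain ⟨q, hq, hqe⟩ := hint p hp j hj (h1 ▸ hij) hc
        rcases hqe with h | h
        · have := (hor q hq).1
          rw [← h, htj] at this
          exact absurd this (by simp)
        · have hqp : q ≠ p := by
            intro he
            rw [he] at h
            exact absurd (h ▸ hc) (lt_irrefl _)
          have hq1i : q.1 ≠ i := by
            have := (hdisj q hq p hp hqp).1
            rwa [h1] at this
          have hq1j : q.1 < j := h ▸ hlt q hq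
          have hq1S : q.1 ∈ S := (hSub q hq).1
          rcases lt_trichotomy q.1 i with hc2 | hc2 | hc2
          · refine absurd ⟨?_, ?_, ?_⟩ (hcross q hq p hp)
            · rw [h1]; exact hc2
            · rw [h1, ← h]; exact hij
            · rw [← h]; exact hc
          · exact absurd hc2 hq1i
          · exact absurd ⟨hc2, hq1j⟩ (hadj q.1 hq1S)
    · -- p.2 = i
      have := (hor p hp).2
      rw [h2, hfi] at this
      exact absurd this (by simp)

lemma erase_valid {lam : Fin n → Bool} {S : Finset (Fin n)} {M : Finset (Fin n × Fin n)}
    (hV : ValidOn lam S M) {i j : Fin n} (hmem : (i, j) ∈ M)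
    (hadj : ∀ l ∈ S, ¬(i < l ∧ l < j)) :
    ValidOn lam ((S.erase i).erase j) (M.erase (i, j)) := by
  obtain ⟨hSub, hlt, hdisj, hcross, hint, hor, hadm⟩ := hV
  refine ⟨?_, ?_, ?_, ?_, ?_, ?_, ?_⟩
  · intro p hp
    rw [Finset.mem_erase] at hp
    obtain ⟨hpne, hpM⟩ := hp
    have hd := hdisj p hpM (i, j) hmem hpne
    simp only [Finset.mem_erase]
    exact ⟨⟨hd.2.1, hd.1, (hSub p hpM).1⟩, ⟨hd.2.2.2, hd.2.2.1, (hSub p hpM).2⟩⟩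
  · intro p hp; exact hlt p (Finset.mem_of_mem_erase hp)
  · intro p hp q hq hpq
    exact hdisj p (Finset.mem_of_mem_erase hp) q (Finset.mem_of_mem_erase hq) hpq
  · intro p hp q hq
    exact hcross p (Finset.mem_of_mem_erase hp) q (Finset.mem_of_mem_erase hq)
  · intro p hp l hl h1 h2
    rw [Finset.mem_erase] at hl
    obtain ⟨hlj, hli⟩ := hl
    rw [Finset.mem_erase] at hli
    obtain ⟨q, hq, hqe⟩ := hint p (Finset.mem_of_mem_erase hp) l hli.2 h1 h2
    refine ⟨q, Finset.mem_erase.mpr ⟨?_, hq⟩, hqe⟩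
    intro he
    rw [he] at hqe
    rcases hqe with h | h
    · exact hli.1 h
    · exact hlj h
  · intro p hp; exact hor p (Finset.mem_of_mem_erase hp)
  · intro a ha b hb hab hfa hfb
    rw [Finset.mem_erase, Finset.mem_erase] at ha hb
    refine hadm a ha.2.2 b hb.2.2 hab ?_ ?_
    · intro p hp
      by_cases hpe : p = (i, j)
      · subst hpe
        exact ⟨fun h => ha.2.1 h.symm, fun h => ha.1 h.symm⟩
      · exact hfa p (Finset.mem_erase.mpr ⟨hpe, hp⟩)
    · intro p hp
      by_cases hpe : p = (i, j)
      · subst hpe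
        exact ⟨fun h => hb.2.1 h.symm, fun h => hb.1 h.symm⟩
      · exact hfb p (Finset.mem_erase.mpr ⟨hpe, hp⟩)

lemma insert_valid {lam : Fin n → Bool} {S : Finset (Fin n)} {M' : Finset (Fin n × Fin n)}
    {i j : Fin n} (hi : i ∈ S) (hj : j ∈ S) (hij : i < j)
    (hfi : lam i = false) (htj : lam j = true)
    (hadj : ∀ l ∈ S, ¬(i < l ∧ l < j))
    (hV : ValidOn lam ((S.erase i).erase j) M') :
    ValidOn lam S (insert (i, j) M') := by
  obtain ⟨hSub, hlt, hdisj, hcross, hint, hor, hadm⟩ := hV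
  have hne : ∀ p ∈ M', p.1 ≠ i ∧ p.1 ≠ j ∧ p.2 ≠ i ∧ p.2 ≠ j ∧ p.1 ∈ S ∧ p.2 ∈ S := by
    intro p hp
    have h1 := (hSub p hp).1
    have h2 := (hSub p hp).2
    rw [Finset.mem_erase, Finset.mem_erase] at h1 h2
    exact ⟨h1.2.1, h1.1, h2.2.1, h2.1, h1.2.2, h2.2.2⟩
  refine ⟨?_, ?_, ?_, ?_, ?_, ?_, ?_⟩
  · intro p hp
    rcases Finset.mem_insert.mp hp with h | h
    · subst h; exact ⟨hi, hj⟩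
    · exact ⟨(hne p h).2.2.2.2.1, (hne p h).2.2.2.2.2⟩
  · intro p hp
    rcases Finset.mem_insert.mp hp with h | h
    · subst h; exact hij
    · exact hlt p h
  · intro p hp q hq hpq
    rcases Finset.mem_insert.mp hp with h | h <;> rcases Finset.mem_insert.mp hq with h' | h'
    · exact absurd (h.trans h'.symm) hpq
    · subst h
      exact ⟨(hne q h').1.symm, (hne q h').2.2.1.symm, (hne q h').2.1.symm, (hne q h').2.2.2.1.symm⟩
    · subst h'
      exact ⟨(hne p h).1, (hne p h).2.1, (hne p h).2.2.1, (hne p h).2.2.2.1⟩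
    · exact hdisj p h q h' hpq
  · intro p hp q hq
    rcases Finset.mem_insert.mp hp with h | h <;> rcases Finset.mem_insert.mp hq with h' | h'
    · subst h; subst h'
      rintro ⟨h1, -, -⟩
      exact lt_irrefl _ h1
    · subst h
      rintro ⟨h1, h2, h3⟩
      exact hadj q.1 (hne q h').2.2.2.2.1 ⟨h1, h2⟩
    · subst h'
      rintro ⟨h1, h2, h3⟩
      exact hadj p.2 (hne p h).2.2.2.2.2 ⟨h2, h3⟩
    · exact hcross p h q h'
  · intro p hp l hl h1 h2
    rcases Finset.mem_insert.mp hp with h | h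
    · subst h
      exact absurd ⟨h1, h2⟩ (hadj l hl)
    · by_cases hli : l = i
      · exact ⟨(i, j), Finset.mem_insert_self _ _, Or.inl hli⟩
      · by_cases hlj : l = j
        · exact ⟨(i, j), Finset.mem_insert_self _ _, Or.inr hlj⟩
        · obtain ⟨q, hq, hqe⟩ := hint p h l
            (Finset.mem_erase.mpr ⟨hlj, Finset.mem_erase.mpr ⟨hli, hl⟩⟩) h1 h2
          exact ⟨q, Finset.mem_insert_of_mem hq, hqe⟩
  · intro p hp
    rcases Finset.mem_insert.mp hp with h | h
    · subst h; exact ⟨hfi, htj⟩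
    · exact hor p h
  · intro a ha b hb hab hfa hfb
    have hia := hfa (i, j) (Finset.mem_insert_self _ _)
    have hib := hfb (i, j) (Finset.mem_insert_self _ _)
    refine hadm a (Finset.mem_erase.mpr ⟨fun h => hia.2 (h ▸ rfl), Finset.mem_erase.mpr ⟨fun h => hia.1 (h ▸ rfl), ha⟩⟩)
      b (Finset.mem_erase.mpr ⟨fun h => hib.2 (h ▸ rfl), Finset.mem_erase.mpr ⟨fun h => hib.1 (h ▸ rfl), hb⟩⟩)
      hab ?_ ?_
    · intro p hp; exact hfa p (Finset.mem_insert_of_mem hp)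
    · intro p hp; exact hfb p (Finset.mem_insert_of_mem hp)

lemma main_lemma (lam : Fin n → Bool) :
    ∀ N : ℕ, ∀ S : Finset (Fin n), S.card ≤ N → ∃! M, ValidOn lam S M := by
  intro N
  induction N with
  | zero =>
    intro S hS
    have hSe : S = ∅ := Finset.card_eq_zero.mp (Nat.le_zero.mp hS)
    subst hSe
    refine ⟨∅, ⟨?_, ?_, ?_, ?_, ?_, ?_, ?_⟩, ?_⟩ <;>
      first
      | (intro p hp; simp at hp)
      | (intro a ha; simp at ha)
      | skip
    intro M hM
    rw [Finset.eq_empty_iff_forall_notMem]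
    intro p hp
    have := (hM.1 p hp).1
    simp at this
  | succ N ih =>
    intro S hS
    by_cases hBad : ∃ i ∈ S, ∃ j ∈ S, i < j ∧ lam i = false ∧ lam j = true
    · obtain ⟨i, hi, j, hj, hij, hfi, htj, hadj⟩ := exists_adjacent_bad lam S hBad
      have hcard : ((S.erase i).erase j).card ≤ N := by
        have h1 : (S.erase i).card < S.card := Finset.card_erase_lt_of_mem hi
        have h2 : ((S.erase i).erase j).card ≤ (S.erase i).card := Finset.card_erase_le
        omega
      obtain ⟨M', hM', huniq'⟩ := ih ((S.erase i).erase j) hcard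
      refine ⟨insert (i, j) M', insert_valid hi hj hij hfi htj hadj hM', ?_⟩
      intro M hM
      have hmem : (i, j) ∈ M := mem_of_adjacent hM hi hj hij hfi htj hadj
      have heq : M.erase (i, j) = M' := huniq' _ (erase_valid hM hmem hadj)
      rw [← Finset.insert_erase hmem, heq]
    · refine ⟨∅, ⟨?_, ?_, ?_, ?_, ?_, ?_, ?_⟩, ?_⟩
      · intro p hp; simp at hp
      · intro p hp; simp at hp
      · intro p hp; simp at hp
      · intro p hp; simp at hp
      · intro p hp; simp at hp
      · intro p hp; simp at hp
      · intro a ha b hb hab _ _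
        rintro ⟨h1, h2⟩
        exact hBad ⟨a, ha, b, hb, hab, h1, h2⟩
      · intro M hM
        rw [Finset.eq_empty_iff_forall_notMem]
        intro p hp
        exact hBad ⟨p.1, (hM.1 p hp).1, p.2, (hM.1 p hp).2, hM.2.1 p hp,
          (hM.2.2.2.2.2.1 p hp).1, (hM.2.2.2.2.2.1 p hp).2⟩

end Aux

lemma valid_univ_iff {n : ℕ} (lam : Fin n → Bool) (M : Finset (Fin n × Fin n)) :
    ValidOn lam Finset.univ M ↔
      (IsCupDiagram M ∧ OrientedFor lam M ∧ AdmissibleFor lam M ∧ cupDegree lam M = 0) := by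
  have hdeg : cupDegree lam M = 0 ↔ ∀ p ∈ M, lam p.1 = false := by
    rw [cupDegree, Finset.card_eq_zero, Finset.filter_eq_empty_iff]
    simp
  constructor
  · rintro ⟨hSub, hlt, hdisj, hcross, hint, hor, hadm⟩
    refine ⟨⟨hlt, hdisj, hcross, fun p hp l => hint p hp l (Finset.mem_univ l)⟩, ?_, ?_, ?_⟩
    · intro p hp
      rw [(hor p hp).1, (hor p hp).2]
      simp
    · intro a b hab hfa hfb
      exact hadm a (Finset.mem_univ a) b (Finset.mem_univ b) hab hfa hfb
    · exact hdeg.mpr fun p hp => (hor p hp).1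
  · rintro ⟨⟨hlt, hdisj, hcross, hint⟩, hor, hadm, hd⟩
    have hfalse := hdeg.mp hd
    refine ⟨fun p hp => ⟨Finset.mem_univ _, Finset.mem_univ _⟩, hlt, hdisj, hcross,
      fun p hp l _ => hint p hp l, ?_, fun a _ b _ => hadm a b⟩
    intro p hp
    refine ⟨hfalse p hp, ?_⟩
    have h1 := hor p hp
    rw [hfalse p hp] at h1
    exact Bool.ne_false_iff.mp (Ne.symm h1)

/-- For every word `λ` there is exactly one cup diagram oriented for `λ`,
admissible for `λ`, and of degree `0` for `λ`. -/
theorem stmt13 (n : ℕ) (hn : 1 ≤ n) (lam : Fin n → Bool) :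
    ∃! M : Finset (Fin n × Fin n),
      IsCupDiagram M ∧ OrientedFor lam M ∧ AdmissibleFor lam M ∧ cupDegree lam M = 0 := by
  obtain ⟨M, hM, huniq⟩ := main_lemma lam Finset.univ.card Finset.univ le_rfl
  exact ⟨M, (valid_univ_iff lam M).mp hM,
    fun M' h' => huniq M' ((valid_univ_iff lam M').mpr h')⟩
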